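/- Let T, T' : ℤ³ → ℝ be functions that are nonzero at every point with μ(i,j,k) ≥ 0 and that both satisfy the octahedron relation at every (i,j,k) ∈ ℤ³ with μ(i,j,k+1) ≥ 2t. Fix (i,j,k) ∈ ℤ³ with μ(i,j,k) ≥ 0. If T(x,y,z) = T'(x,y,z) for every point (x,y,z) of the initial-data band satisfying |x−i| + |y−j| ≤ k − z, then T(i,j,k) = T'(i,j,k); that is, the value of the T-system solution at (i,j,k) depends only on the initial data lying inside the cone |x−i| + |y−j| ≤ |z−k| with apex (i,j,k). -/
import Mathlib


/-- The value of the T-system solution at `(i,j,k)` depends only on the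
initial data (on the band `0 ≤ r·x+s·y+t·z < 2t`) lying inside the cone
`|x−i| + |y−j| ≤ k − z` with apex `(i,j,k)`. -/
theorem Tsystem_depends_only_on_cone
    (r s t : ℤ) (hr0 : 0 ≤ r) (hrt : r < t) (hs0 : 0 ≤ s) (hst : s < t)
    (T T' : ℤ → ℤ → ℤ → ℝ)
    (hT0 : ∀ i j k : ℤ, 0 ≤ r * i + s * j + t * k → T i j k ≠ 0)
    (hT'0 : ∀ i j k : ℤ, 0 ≤ r * i + s * j + t * k → T' i j k ≠ 0)
    (hT : ∀ i j k : ℤ, 2 * t ≤ r * i + s * j + t * (k + 1) →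
      T i j (k + 1) * T i j (k - 1)
        = T (i + 1) j k * T (i - 1) j k + T i (j + 1) k * T i (j - 1) k)
    (hT' : ∀ i j k : ℤ, 2 * t ≤ r * i + s * j + t * (k + 1) →
      T' i j (k + 1) * T' i j (k - 1)
        = T' (i + 1) j k * T' (i - 1) j k + T' i (j + 1) k * T' i (j - 1) k)
    (i j k : ℤ) (hμ : 0 ≤ r * i + s * j + t * k)
    (hinit : ∀ x y z : ℤ, 0 ≤ r * x + s * y + t * z → r * x + s * y + t * z < 2 * t →
      |x - i| + |y - j| ≤ k - z → T x y z = T' x y z) :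
    T i j k = T' i j k := by
  have key : ∀ n : ℕ, ∀ i j k : ℤ, r * i + s * j + t * k = (n : ℤ) →
      (∀ x y z : ℤ, 0 ≤ r * x + s * y + t * z → r * x + s * y + t * z < 2 * t →
        |x - i| + |y - j| ≤ k - z → T x y z = T' x y z) →
      T i j k = T' i j k := by
    intro n
    induction n using Nat.strong_induction_on with
    | _ n ih =>
      intro i j k hμn hinit
      by_cases hband : r * i + s * j + t * k < 2 * t
      · exact hinit i j k (by omega) hband (by simp)
      · push_neg at hband
        -- recurse
        have hA := hT i j (k - 1) (by
          have : r * i + s * j + t * (k - 1 + 1) = r * i + s * j + t * k := by ring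
          rw [this]; exact hband)
        have hA' := hT' i j (k - 1) (by
          have : r * i + s * j + t * (k - 1 + 1) = r * i + s * j + t * k := by ring
          rw [this]; exact hband)
        rw [show k - 1 + 1 = k from by ring, show k - 1 - 1 = k - 2 from by ring] at hA hA'
        have tri : ∀ a c : ℤ, |a| ≤ |a - c| + |c| := by
          intro a c
          calc |a| = |(a - c) + c| := by ring_nf
            _ ≤ |a - c| + |c| := abs_add_le _ _
        -- helper to apply ih at a neighbor
        have step : ∀ i' j' k' : ℤ, r * i' + s * j' + t * k' < (n : ℤ) →
            0 ≤ r * i' + s * j' + t * k' →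
            (∀ x y z : ℤ, 0 ≤ r * x + s * y + t * z → r * x + s * y + t * z < 2 * t →
              |x - i'| + |y - j'| ≤ k' - z → T x y z = T' x y z) →
            T i' j' k' = T' i' j' k' := by
          intro i' j' k' hlt hge hinit'
          exact ih (r * i' + s * j' + t * k').toNat (by omega) i' j' k' (by omega) hinit'
        have ht : 0 < t := lt_of_le_of_lt hr0 hrt
        have e1 : T (i + 1) j (k - 1) = T' (i + 1) j (k - 1) := by
          apply step <;> try omega
          · nlinarith
          · nlinarith
          · intro x y z h1 h2 h3
            apply hinit x y z h1 h2
            rw [show x - (i + 1) = x - i - 1 from by ring] at h3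
            have t1 : |x - i| ≤ |x - i - 1| + 1 := by
              have := tri (x - i) (1 : ℤ)
              simpa using this
            omega
        have e2 : T (i - 1) j (k - 1) = T' (i - 1) j (k - 1) := by
          apply step <;> try omega
          · nlinarith
          · nlinarith
          · intro x y z h1 h2 h3
            apply hinit x y z h1 h2
            rw [show x - (i - 1) = x - i + 1 from by ring] at h3
            have t1 : |x - i| ≤ |x - i + 1| + 1 := by
              have := tri (x - i) (-1 : ℤ)
              simpa using this
            omega
        have e3 : T i (j + 1) (k - 1) = T' i (j + 1) (k - 1) := by
          apply step <;> try omega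
          · nlinarith
          · nlinarith
          · intro x y z h1 h2 h3
            apply hinit x y z h1 h2
            rw [show y - (j + 1) = y - j - 1 from by ring] at h3
            have t1 : |y - j| ≤ |y - j - 1| + 1 := by
              have := tri (y - j) (1 : ℤ)
              simpa using this
            omega
        have e4 : T i (j - 1) (k - 1) = T' i (j - 1) (k - 1) := by
          apply step <;> try omega
          · nlinarith
          · nlinarith
          · intro x y z h1 h2 h3
            apply hinit x y z h1 h2
            rw [show y - (j - 1) = y - j + 1 from by ring] at h3
            have t1 : |y - j| ≤ |y - j + 1| + 1 := by
              have := tri (y - j) (-1 : ℤ)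
              simpa using this
            omega
        have e5 : T i j (k - 2) = T' i j (k - 2) := by
          apply step <;> try omega
          · nlinarith
          · nlinarith
          · intro x y z h1 h2 h3
            apply hinit x y z h1 h2
            omega
        have hne : T' i j (k - 2) ≠ 0 := hT'0 i j (k - 2) (by nlinarith)
        have hmain : T i j k * T' i j (k - 2) = T' i j k * T' i j (k - 2) := by
          calc T i j k * T' i j (k - 2) = T i j k * T i j (k - 2) := by rw [e5]
            _ = T (i + 1) j (k - 1) * T (i - 1) j (k - 1)
                + T i (j + 1) (k - 1) * T i (j - 1) (k - 1) := hA
            _ = T' (i + 1) j (k - 1) * T' (i - 1) j (k - 1)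
                + T' i (j + 1) (k - 1) * T' i (j - 1) (k - 1) := by rw [e1, e2, e3, e4]
            _ = T' i j k * T' i j (k - 2) := hA'.symm
        exact mul_right_cancel₀ hne hmain
  exact key (r * i + s * j + t * k).toNat i j k (by omega) hinit
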